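/- If F_μ belongs to the class Ẽ, then for every n ≥ 2 one has Ξ(n)·aₙ ≤ (A−B)(1−γ); in particular, whenever Ξ(n) > 0, aₙ ≤ (A−B)(1−γ)/Ξ(n). -/

import Mathlib

open Complex

/-- `Ξ(n) = (1−B)((μn)^k ϑₙ − (μn)^m λₙ) + (A−B)(1−γ)(μn)^m λₙ`. -/
noncomputable def Xi (μ A B γ : ℝ) (k m : ℕ) (ϑ lam : ℕ → ℝ) (n : ℕ) : ℝ :=
  (1 - B) * ((μ * n) ^ k * ϑ n - (μ * n) ^ m * lam n) +
    (A - B) * (1 - γ) * ((μ * n) ^ m * lam n)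

/-- `Gneg μ j c a z = z − Σ_{n≥2} (μn)^j cₙ aₙ z^{μn}` (principal powers).
With `j = k, c = ϑ` this is `D_μ^k(F_μ∗Φ_μ)(z)`; with `j = m, c = λ` it is
`D_μ^m(F_μ∗Ψ_μ)(z)`. -/
noncomputable def Gneg (μ : ℝ) (j : ℕ) (c a : ℕ → ℝ) (z : ℂ) : ℂ :=
  z - ∑' n : ℕ, (((μ * (n + 2 : ℕ)) ^ j * c (n + 2) * a (n + 2) : ℝ) : ℂ) *
    z ^ ((μ * (n + 2 : ℕ) : ℝ) : ℂ)

/-- `Fneg μ a z = z − Σ_{n≥2} aₙ z^{μn}` (principal powers). -/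
noncomputable def Fneg (μ : ℝ) (a : ℕ → ℝ) (z : ℂ) : ℂ :=
  z - ∑' n : ℕ, (a (n + 2) : ℂ) * z ^ ((μ * (n + 2 : ℕ) : ℝ) : ℂ)

/-- Membership of `F_μ(z) = z − Σ_{n≥2} aₙ z^{μn}` in the class
`Ẽ_{k,m}(Φ_μ,Ψ_μ,A,B,μ,γ)`: the series for `F_μ`, `G = D_μ^k(F_μ∗Φ_μ)` and
`H = D_μ^m(F_μ∗Ψ_μ)` converge absolutely at every `z ∈ 𝕌`, and for every
`z ∈ 𝕌 ∖ {0}` the subordination condition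
`|G(z) − H(z)| < |(A−B)(1−γ)H(z) − B(G(z) − H(z))|` holds. -/
def memE (μ A B γ : ℝ) (k m : ℕ) (ϑ lam a : ℕ → ℝ) : Prop :=
  (∀ z : ℂ, norm z < 1 →
    ((Summable fun n : ℕ =>
      norm ((a (n + 2) : ℂ) * z ^ ((μ * (n + 2 : ℕ) : ℝ) : ℂ))) ∧
    (Summable fun n : ℕ =>
      norm ((((μ * (n + 2 : ℕ)) ^ k * ϑ (n + 2) * a (n + 2) : ℝ) : ℂ) *
        z ^ ((μ * (n + 2 : ℕ) : ℝ) : ℂ))) ∧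
    (Summable fun n : ℕ =>
      norm ((((μ * (n + 2 : ℕ)) ^ m * lam (n + 2) * a (n + 2) : ℝ) : ℂ) *
        z ^ ((μ * (n + 2 : ℕ) : ℝ) : ℂ))))) ∧
  (∀ z : ℂ, norm z < 1 → z ≠ 0 →
    norm (Gneg μ k ϑ a z - Gneg μ m lam a z) <
    norm ((((A - B) * (1 - γ) : ℝ) : ℂ) * Gneg μ m lam a z -
      ((B : ℝ) : ℂ) * (Gneg μ k ϑ a z - Gneg μ m lam a z)))

/-- The real series `Σ_{n≥2} (μn)^j cₙ aₙ r^{μn}`. -/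
noncomputable def Sreal (μ : ℝ) (j : ℕ) (c a : ℕ → ℝ) (r : ℝ) : ℝ :=
  ∑' n : ℕ, (μ * (n + 2 : ℕ)) ^ j * c (n + 2) * a (n + 2) * r ^ (μ * (n + 2 : ℕ) : ℝ)

/-- The real series `Σ_{n≥2} Ξ(n) aₙ r^{μn}`. -/
noncomputable def SXi (μ A B γ : ℝ) (k m : ℕ) (ϑ lam a : ℕ → ℝ) (r : ℝ) : ℝ :=
  ∑' n : ℕ, Xi μ A B γ k m ϑ lam (n + 2) * a (n + 2) * r ^ (μ * (n + 2 : ℕ) : ℝ)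

lemma gneg_real (μ : ℝ) (j : ℕ) (c a : ℕ → ℝ) {r : ℝ} (hr : 0 ≤ r) :
    Gneg μ j c a (r : ℂ) = ((r - Sreal μ j c a r : ℝ) : ℂ) := by
  rw [Gneg, Sreal, Complex.ofReal_sub, Complex.ofReal_tsum]
  congr 1
  exact tsum_congr fun n => by
    rw [← Complex.ofReal_cpow hr, ← Complex.ofReal_mul]

lemma summable_real_of_abs {w : ℕ → ℝ} {e : ℕ → ℝ} {r : ℝ} (hr : 0 ≤ r)
    (h : Summable fun n => norm ((w n : ℂ) * (r : ℂ) ^ ((e n : ℝ) : ℂ))) :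
    Summable fun n => w n * r ^ (e n) := by
  apply Summable.of_abs
  refine h.congr fun n => ?_
  rw [← Complex.ofReal_cpow hr, ← Complex.ofReal_mul, Complex.norm_real, Real.norm_eq_abs]

/-- coefficient-bound corollary: if
`F_μ ∈ Ẽ_{k,m}(Φ_μ,Ψ_μ,A,B,μ,γ)` then `Ξ(n)aₙ ≤ (A−B)(1−γ)` for every `n ≥ 2`;
in particular `aₙ ≤ (A−B)(1−γ)/Ξ(n)` whenever `Ξ(n) > 0`. -/
theorem stmt2 (μ A B γ : ℝ) (k m : ℕ) (a ϑ lam : ℕ → ℝ)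
    (hμ : 1 ≤ μ) (hkm : m ≤ k)
    (hB : -1 ≤ B) (hBA : B < A) (hA : A ≤ 1) (hB0 : B < 0)
    (hγ0 : 0 ≤ γ) (hγ1 : γ < 1)
    (ha : ∀ n, 2 ≤ n → 0 ≤ a n)
    (hlam : ∀ n, 2 ≤ n → 0 ≤ lam n) (hϑ : ∀ n, 2 ≤ n → lam n ≤ ϑ n)
    (hmem : memE μ A B γ k m ϑ lam a) :
    ∀ n, 2 ≤ n →
      Xi μ A B γ k m ϑ lam n * a n ≤ (A - B) * (1 - γ) ∧
      (0 < Xi μ A B γ k m ϑ lam n →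
        a n ≤ (A - B) * (1 - γ) / Xi μ A B γ k m ϑ lam n) := by
  obtain ⟨hsum, hcond⟩ := hmem
  have hP : 0 < (A - B) * (1 - γ) := mul_pos (by linarith) (by linarith)
  -- basic facts about the exponents/base
  have he2 : ∀ i : ℕ, (2 : ℝ) ≤ μ * ((i + 2 : ℕ) : ℝ) := by
    intro i
    have h1 : (2 : ℝ) ≤ ((i + 2 : ℕ) : ℝ) := by exact_mod_cast Nat.le_add_left 2 i
    calc (2 : ℝ) = 1 * 2 := by ring
    _ ≤ μ * ((i + 2 : ℕ) : ℝ) :=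
        mul_le_mul hμ h1 (by norm_num) (le_trans zero_le_one hμ)
  have he0 : ∀ i : ℕ, (0 : ℝ) ≤ μ * ((i + 2 : ℕ) : ℝ) := fun i =>
    le_trans (by norm_num) (he2 i)
  -- shorthand for the coefficient sequences
  set U : ℕ → ℝ := fun i => (μ * ((i + 2 : ℕ) : ℝ)) ^ k * ϑ (i + 2) * a (i + 2) with hUdef
  set V : ℕ → ℝ := fun i => (μ * ((i + 2 : ℕ) : ℝ)) ^ m * lam (i + 2) * a (i + 2) with hVdef
  set c : ℕ → ℝ := fun i => Xi μ A B γ k m ϑ lam (i + 2) * a (i + 2) with hcdef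
  have hcUV : ∀ i, c i = (1 - B) * (U i - V i) + (A - B) * (1 - γ) * V i := by
    intro i
    simp only [hcdef, hUdef, hVdef, Xi]
    ring
  have hVU : ∀ i, V i ≤ U i := by
    intro i
    have hb1 : (1 : ℝ) ≤ μ * ((i + 2 : ℕ) : ℝ) := le_trans one_le_two (he2 i)
    have h1 : (μ * ((i + 2 : ℕ) : ℝ)) ^ m ≤ (μ * ((i + 2 : ℕ) : ℝ)) ^ k :=
      pow_le_pow_right₀ hb1 hkm
    have h2 := hlam (i + 2) (by omega)
    have h3 := hϑ (i + 2) (by omega)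
    have h4 := ha (i + 2) (by omega)
    have hbm : (0 : ℝ) ≤ (μ * ((i + 2 : ℕ) : ℝ)) ^ m := pow_nonneg (by linarith) m
    have key : (μ * ((i + 2 : ℕ) : ℝ)) ^ m * lam (i + 2)
        ≤ (μ * ((i + 2 : ℕ) : ℝ)) ^ k * ϑ (i + 2) := by nlinarith
    exact mul_le_mul_of_nonneg_right key h4
  have hV0 : ∀ i, 0 ≤ V i := by
    intro i
    have h2 := hlam (i + 2) (by omega)
    have h4 := ha (i + 2) (by omega)
    have hbm : (0 : ℝ) ≤ (μ * ((i + 2 : ℕ) : ℝ)) ^ m := pow_nonneg (by linarith [he0 i]) m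
    exact mul_nonneg (mul_nonneg hbm h2) h4
  have hc0 : ∀ i, 0 ≤ c i := by
    intro i
    rw [hcUV i]
    have := hVU i
    have := hV0 i
    nlinarith
  have habs : ∀ r : ℝ, 0 ≤ r → r < 1 → norm (r : ℂ) < 1 := by
    intro r h0 h1
    rw [Complex.norm_real, Real.norm_eq_abs, _root_.abs_of_nonneg h0]
    exact h1
  -- summability at each radius
  have hSU : ∀ r : ℝ, 0 < r → r < 1 →
      Summable fun i : ℕ => U i * r ^ (μ * ((i + 2 : ℕ) : ℝ)) := by
    intro r h0 h1
    exact summable_real_of_abs h0.le (hsum (r : ℂ) (habs r h0.le h1)).2.1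
  have hSV : ∀ r : ℝ, 0 < r → r < 1 →
      Summable fun i : ℕ => V i * r ^ (μ * ((i + 2 : ℕ) : ℝ)) := by
    intro r h0 h1
    exact summable_real_of_abs h0.le (hsum (r : ℂ) (habs r h0.le h1)).2.2
  have hSc : ∀ r : ℝ, 0 < r → r < 1 →
      Summable fun i : ℕ => c i * r ^ (μ * ((i + 2 : ℕ) : ℝ)) := by
    intro r h0 h1
    have heq : (fun i : ℕ => c i * r ^ (μ * ((i + 2 : ℕ) : ℝ)))
        = fun i : ℕ => (1 - B) * (U i * r ^ (μ * ((i + 2 : ℕ) : ℝ))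
            - V i * r ^ (μ * ((i + 2 : ℕ) : ℝ)))
          + (A - B) * (1 - γ) * (V i * r ^ (μ * ((i + 2 : ℕ) : ℝ))) := by
      funext i
      rw [hcUV i]; ring
    rw [heq]
    exact ((((hSU r h0 h1).sub (hSV r h0 h1)).mul_left _).add
      (((hSV r h0 h1)).mul_left _))
  -- expression of the Ξ-series in terms of the two basic series
  have hSXi_eq : ∀ r : ℝ, 0 < r → r < 1 →
      SXi μ A B γ k m ϑ lam a r
        = (1 - B) * (Sreal μ k ϑ a r - Sreal μ m lam a r)
          + (A - B) * (1 - γ) * Sreal μ m lam a r := by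
    intro r h0 h1
    have step1 : SXi μ A B γ k m ϑ lam a r
        = ∑' i : ℕ, ((1 - B) * (U i * r ^ (μ * ((i + 2 : ℕ) : ℝ))
            - V i * r ^ (μ * ((i + 2 : ℕ) : ℝ)))
          + (A - B) * (1 - γ) * (V i * r ^ (μ * ((i + 2 : ℕ) : ℝ)))) := by
      rw [SXi]
      exact tsum_congr fun i => by rw [show Xi μ A B γ k m ϑ lam (i + 2) * a (i + 2) = c i from rfl, hcUV i]; ring
    rw [step1, Summable.tsum_add ((((hSU r h0 h1).sub (hSV r h0 h1)).mul_left _))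
      (((hSV r h0 h1)).mul_left _), tsum_mul_left, tsum_mul_left,
      Summable.tsum_sub (hSU r h0 h1) (hSV r h0 h1)]
    rfl
  -- the subordination condition forbids `SXi r = P r`
  have hne : ∀ r : ℝ, 0 < r → r < 1 →
      (A - B) * (1 - γ) * r - SXi μ A B γ k m ϑ lam a r ≠ 0 := by
    intro r h0 h1 hD
    have h2 := hcond (r : ℂ) (habs r h0.le h1) (Complex.ofReal_ne_zero.mpr h0.ne')
    rw [gneg_real μ k ϑ a h0.le, gneg_real μ m lam a h0.le,
      ← Complex.ofReal_sub, ← Complex.ofReal_mul, ← Complex.ofReal_mul,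
      ← Complex.ofReal_sub, Complex.norm_real, Complex.norm_real,
      Real.norm_eq_abs, Real.norm_eq_abs] at h2
    have hX : (r - Sreal μ k ϑ a r) - (r - Sreal μ m lam a r)
        = -(Sreal μ k ϑ a r - Sreal μ m lam a r) := by ring
    have hR : (A - B) * (1 - γ) * (r - Sreal μ m lam a r)
        - B * (-(Sreal μ k ϑ a r - Sreal μ m lam a r))
        = Sreal μ k ϑ a r - Sreal μ m lam a r := by
      have h3 := hSXi_eq r h0 h1
      linarith [hD, h3]
    rw [hX, hR, abs_neg] at h2
    exact lt_irrefl _ h2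
  -- positivity of the discrepancy on all of (0,1)
  have hlt : ∀ r : ℝ, 0 < r → r < 1 →
      SXi μ A B γ k m ϑ lam a r < (A - B) * (1 - γ) * r := by
    intro r h0 h1
    by_contra hcon
    push_neg at hcon
    have hgt : (A - B) * (1 - γ) * r < SXi μ A B γ k m ϑ lam a r :=
      lt_of_le_of_ne hcon (fun h => hne r h0 h1 (by linarith))
    have hg0 : 0 < SXi μ A B γ k m ϑ lam a r :=
      lt_trans (by positivity) hgt
    set t : ℝ := (A - B) * (1 - γ) * r / (2 * SXi μ A B γ k m ϑ lam a r) with htdef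
    have ht0 : 0 < t := by positivity
    have ht1 : t < 1 := by
      rw [htdef, div_lt_one (by positivity)]
      linarith
    have htg : t * SXi μ A B γ k m ϑ lam a r = (A - B) * (1 - γ) * r / 2 := by
      rw [htdef]
      field_simp
    have hr10 : 0 < t * r := mul_pos ht0 h0
    have hr1lt : t * r < r := by nlinarith
    have hr11 : t * r < 1 := lt_trans hr1lt h1
    -- scaling estimate: SXi (t r) ≤ t² SXi r
    have hscale : SXi μ A B γ k m ϑ lam a (t * r)
        ≤ t ^ 2 * SXi μ A B γ k m ϑ lam a r := by
      have hterm : ∀ i : ℕ, c i * (t * r) ^ (μ * ((i + 2 : ℕ) : ℝ))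
          ≤ t ^ 2 * (c i * r ^ (μ * ((i + 2 : ℕ) : ℝ))) := by
        intro i
        rw [Real.mul_rpow ht0.le h0.le]
        have h2 : t ^ (μ * ((i + 2 : ℕ) : ℝ)) ≤ t ^ (2 : ℝ) :=
          Real.rpow_le_rpow_of_exponent_ge ht0 ht1.le (he2 i)
        have h3 : t ^ (2 : ℝ) = t ^ 2 := by
          rw [show ((2 : ℝ)) = ((2 : ℕ) : ℝ) by norm_num, Real.rpow_natCast]
        have h4 : (0 : ℝ) ≤ r ^ (μ * ((i + 2 : ℕ) : ℝ)) := Real.rpow_nonneg h0.le _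
        calc c i * (t ^ (μ * ((i + 2 : ℕ) : ℝ)) * r ^ (μ * ((i + 2 : ℕ) : ℝ)))
            ≤ c i * (t ^ 2 * r ^ (μ * ((i + 2 : ℕ) : ℝ))) := by
              apply mul_le_mul_of_nonneg_left _ (hc0 i)
              apply mul_le_mul_of_nonneg_right _ h4
              rw [← h3]; exact h2
          _ = t ^ 2 * (c i * r ^ (μ * ((i + 2 : ℕ) : ℝ))) := by ring
      calc SXi μ A B γ k m ϑ lam a (t * r)
          ≤ ∑' i : ℕ, t ^ 2 * (c i * r ^ (μ * ((i + 2 : ℕ) : ℝ))) :=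
            Summable.tsum_le_tsum hterm (hSc (t * r) hr10 hr11) ((hSc r h0 h1).mul_left _)
        _ = t ^ 2 * SXi μ A B γ k m ϑ lam a r := tsum_mul_left
    have hfr1 : 0 < (A - B) * (1 - γ) * (t * r) - SXi μ A B γ k m ϑ lam a (t * r) := by
      nlinarith
    -- continuity of the discrepancy on [t r, r]
    have hgcont : ContinuousOn (fun x : ℝ => SXi μ A B γ k m ϑ lam a x)
        (Set.Icc (t * r) r) := by
      apply continuousOn_tsum
        (u := fun i : ℕ => c i * r ^ (μ * ((i + 2 : ℕ) : ℝ)))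
      · intro i
        apply ContinuousOn.mul continuousOn_const
        intro x hx
        exact (Real.continuousAt_rpow_const x _
          (Or.inl (ne_of_gt (lt_of_lt_of_le hr10 hx.1)))).continuousWithinAt
      · exact hSc r h0 h1
      · intro i x hx
        have hx0 : 0 < x := lt_of_lt_of_le hr10 hx.1
        rw [Real.norm_eq_abs, _root_.abs_of_nonneg
          (mul_nonneg (hc0 i) (Real.rpow_nonneg hx0.le _))]
        exact mul_le_mul_of_nonneg_left
          (Real.rpow_le_rpow hx0.le hx.2 (he0 i)) (hc0 i)
    have hfcont : ContinuousOn
        (fun x : ℝ => (A - B) * (1 - γ) * x - SXi μ A B γ k m ϑ lam a x)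
        (Set.Icc (t * r) r) :=
      (continuousOn_const.mul continuousOn_id).sub hgcont
    have hivt := intermediate_value_Icc' hr1lt.le hfcont
    have h0mem : (0 : ℝ) ∈ Set.Icc
        ((A - B) * (1 - γ) * r - SXi μ A B γ k m ϑ lam a r)
        ((A - B) * (1 - γ) * (t * r) - SXi μ A B γ k m ϑ lam a (t * r)) :=
      ⟨by linarith, hfr1.le⟩
    obtain ⟨x, hxmem, hfx⟩ := hivt h0mem
    exact hne x (lt_of_lt_of_le hr10 hxmem.1) (lt_of_le_of_lt hxmem.2 h1) hfx
  -- conclude: take the single term and let r → 1⁻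
  intro n hn
  obtain ⟨j, rfl⟩ : ∃ j, n = j + 2 := ⟨n - 2, by omega⟩
  have hmain : c j ≤ (A - B) * (1 - γ) := by
    have hev : ∀ r : ℝ, 0 < r → r < 1 →
        c j * r ^ (μ * ((j + 2 : ℕ) : ℝ)) ≤ (A - B) * (1 - γ) * r := by
      intro r h0 h1
      refine le_trans ?_ (hlt r h0 h1).le
      exact Summable.le_tsum (hSc r h0 h1) j fun i _ =>
        mul_nonneg (hc0 i) (Real.rpow_nonneg h0.le _)
    have hT1 : Filter.Tendsto (fun r : ℝ => c j * r ^ (μ * ((j + 2 : ℕ) : ℝ)))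
        (nhdsWithin 1 (Set.Iio 1)) (nhds (c j)) := by
      have h1 : ContinuousAt (fun r : ℝ => r ^ (μ * ((j + 2 : ℕ) : ℝ))) 1 :=
        Real.continuousAt_rpow_const 1 _ (Or.inl one_ne_zero)
      have h2 : ContinuousAt (fun r : ℝ => c j * r ^ (μ * ((j + 2 : ℕ) : ℝ))) 1 :=
        h1.const_mul _
      have h3 := h2.tendsto
      rw [Real.one_rpow, mul_one] at h3
      exact h3.mono_left nhdsWithin_le_nhds
    have hT2 : Filter.Tendsto (fun r : ℝ => (A - B) * (1 - γ) * r)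
        (nhdsWithin 1 (Set.Iio 1)) (nhds ((A - B) * (1 - γ))) := by
      have h2 : ContinuousAt (fun r : ℝ => (A - B) * (1 - γ) * r) 1 :=
        (continuous_const.mul continuous_id).continuousAt
      have h3 := h2.tendsto
      rw [mul_one] at h3
      exact h3.mono_left nhdsWithin_le_nhds
    refine le_of_tendsto_of_tendsto hT1 hT2 ?_
    have hpos : ∀ᶠ r : ℝ in nhdsWithin 1 (Set.Iio 1), 0 < r :=
      (eventually_gt_nhds one_pos).filter_mono nhdsWithin_le_nhds
    have hlt1 : ∀ᶠ r : ℝ in nhdsWithin 1 (Set.Iio 1), r < 1 :=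
      eventually_mem_nhdsWithin
    filter_upwards [hpos, hlt1] with r h0 h1
    exact hev r h0 h1
  refine ⟨hmain, fun hXi => ?_⟩
  rw [le_div_iff₀ hXi]
  calc a (j + 2) * Xi μ A B γ k m ϑ lam (j + 2)
      = c j := by rw [hcdef]; ring
    _ ≤ (A - B) * (1 - γ) := hmain
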